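/- Let q ≥ 2 and let A be the unital *-algebra with basis {M_n : n ≥ 0} ∪ {monomials in an element [s]} satisfying [s]*[s] = q·1 and [s]ⁿ([s]*)ⁿ = Σ_{i=0}^{n} M_i for all n ≥ 0 (with M_0 = 1 and each M_n self-adjoint). Then the M_n satisfy the multiplication rules M_mM_n = M_nM_m = (q−1)q^{n−1}M_m for m > n > 0, and M_m² = (q−2)q^{m−1}M_m + (q−1)q^{m−1}·Σ_{i=0}^{m−1}M_i for m > 0. -/

import Mathlib

/-- in a unital complex *-algebra containing an element `[s]` and
self-adjoint elements `M_n` with `M_0 = 1`, `[s]*[s] = q·1` and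
`[s]ⁿ([s]*)ⁿ = Σ_{i=0}^n M_i`, the `M_n` satisfy the multiplication rules
`M_mM_n = M_nM_m = (q−1)q^{n−1}M_m` for `m > n > 0` and
`M_m² = (q−2)q^{m−1}M_m + (q−1)q^{m−1}Σ_{i=0}^{m−1}M_i` for `m > 0`. -/
theorem stmt_19 {A : Type*} [Ring A] [Algebra ℂ A] [StarRing A] [StarModule ℂ A]
    (q : ℕ) (hq : 2 ≤ q) (s : A) (M : ℕ → A)
    (hM0 : M 0 = 1) (hsa : ∀ n, star (M n) = M n)
    (hs : star s * s = (q : ℂ) • (1 : A))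
    (hrange : ∀ n : ℕ, s ^ n * star s ^ n = ∑ i ∈ Finset.range (n + 1), M i) :
    (∀ m n : ℕ, n < m → 0 < n →
      M m * M n = (((q : ℂ) - 1) * (q : ℂ) ^ (n - 1)) • M m ∧
      M n * M m = (((q : ℂ) - 1) * (q : ℂ) ^ (n - 1)) • M m) ∧
    (∀ m : ℕ, 0 < m →
      M m * M m = (((q : ℂ) - 2) * (q : ℂ) ^ (m - 1)) • M m
        + (((q : ℂ) - 1) * (q : ℂ) ^ (m - 1)) • ∑ i ∈ Finset.range m, M i) := by
  set S : ℕ → A := fun n => ∑ i ∈ Finset.range (n + 1), M i with hSdef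
  have hS : ∀ n, s ^ n * star s ^ n = S n := hrange
  -- star s ^ (b+k) * s ^ b = q^b • star s ^ k
  have h1 : ∀ b k : ℕ, star s ^ (b + k) * s ^ b = ((q : ℂ) ^ b) • star s ^ k := by
    intro b
    induction b with
    | zero => intro k; simp
    | succ b ih =>
      intro k
      have e1 : star s ^ (b + 1 + k) = star s ^ (b + k) * star s := by
        rw [← pow_succ]; ring_nf
      have e2 : s ^ (b + 1) = s * s ^ b := pow_succ' s b
      rw [e1, e2, mul_assoc, ← mul_assoc (star s), hs, smul_mul_assoc, one_mul,
        mul_smul_comm, ih, smul_smul, ← pow_succ']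
  have h2 : ∀ b k : ℕ, star s ^ b * s ^ (b + k) = ((q : ℂ) ^ b) • s ^ k := by
    intro b
    induction b with
    | zero => intro k; simp
    | succ b ih =>
      intro k
      have e1 : star s ^ (b + 1) = star s ^ b * star s := pow_succ (star s) b
      have e2 : s ^ (b + 1 + k) = s * s ^ (b + k) := by
        rw [← pow_succ']; ring_nf
      rw [e1, e2, mul_assoc, ← mul_assoc (star s), hs, smul_mul_assoc, one_mul,
        mul_smul_comm, ih, smul_smul, ← pow_succ']
  -- products of S
  have key : ∀ a b : ℕ, b ≤ a → S a * S b = ((q : ℂ) ^ b) • S a ∧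
      S b * S a = ((q : ℂ) ^ b) • S a := by
    intro a b hba
    obtain ⟨k, rfl⟩ := Nat.exists_eq_add_of_le hba
    constructor
    · rw [← hS, ← hS, mul_assoc, ← mul_assoc (star s ^ (b + k)), h1,
        smul_mul_assoc, mul_smul_comm, ← smul_mul_assoc, ← pow_add, add_comm k b,
        smul_mul_assoc, hS]
    · rw [← hS, ← hS, mul_assoc, ← mul_assoc (star s ^ b), h2,
        smul_mul_assoc, mul_smul_comm, ← smul_mul_assoc, ← mul_assoc,
        smul_mul_assoc, smul_mul_assoc, ← pow_add, hS]
  have hMsub : ∀ n : ℕ, M (n + 1) = S (n + 1) - S n := by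
    intro n
    have : S (n + 1) = S n + M (n + 1) := Finset.sum_range_succ M (n + 1)
    rw [this]; abel
  constructor
  · rintro m n hnm hn
    obtain ⟨a, rfl⟩ := Nat.exists_eq_add_of_lt hn
    obtain ⟨b, rfl⟩ := Nat.exists_eq_add_of_lt hnm
    simp only [Nat.zero_add] at *
    have hm1 : a + 1 + b + 1 = a + b + 1 + 1 := by omega
    rw [hm1]
    have e1 := (key (a + b + 2) (a + 1) (by omega)).1
    have e2 := (key (a + b + 2) (a + 1) (by omega)).2
    have e3 := (key (a + b + 2) a (by omega)).1
    have e4 := (key (a + b + 2) a (by omega)).2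
    have e5 := (key (a + b + 1) (a + 1) (by omega)).1
    have e6 := (key (a + b + 1) (a + 1) (by omega)).2
    have e7 := (key (a + b + 1) a (by omega)).1
    have e8 := (key (a + b + 1) a (by omega)).2
    have hMm := hMsub (a + b + 1)
    have hMn := hMsub a
    have hsub : a + 1 - 1 = a := by omega
    have hE : a + b + 1 + 1 = a + b + 2 := by omega
    rw [hsub, hE] at *
    constructor
    · rw [hMm, hMn, sub_mul, mul_sub, mul_sub, e1, e3, e5, e7, smul_sub, pow_succ]
      module
    · rw [hMm, hMn, sub_mul, mul_sub, mul_sub, e2, e4, e6, e8, smul_sub, pow_succ]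
      module
  · rintro m hm
    obtain ⟨a, rfl⟩ := Nat.exists_eq_add_of_lt hm
    simp only [Nat.zero_add] at *
    have e1 := (key (a + 1) (a + 1) (le_refl _)).1
    have e2 := (key (a + 1) a (by omega)).1
    have e3 := (key (a + 1) a (by omega)).2
    have e4 := (key a a (le_refl _)).1
    have hMm := hMsub a
    have hsub : a + 1 - 1 = a := by omega
    have hr : ∑ i ∈ Finset.range (a + 1), M i = S a := rfl
    rw [hsub, hr, hMm, sub_mul, mul_sub, mul_sub, e1, e2, e3, e4, smul_sub, pow_succ]
    module
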